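/- Let Λ be a pseudo-symmetric numerical semigroup of genus g(Λ) ≥ 5, i.e., c(Λ) = 2g(Λ) − 1. Then Λ has no grandchildren: there is no pair μ_1 < μ_2 such that μ_1 is a right generator of Λ and μ_2 is a right generator of Λ∖{μ_1}. -/
import Mathlib


/-- A numerical semigroup: a cofinite submonoid of ℕ, viewed as a set of naturals. -/
def IsNumericalSemigroup (S : Set ℕ) : Prop :=
  0 ∈ S ∧ (∀ a ∈ S, ∀ b ∈ S, a + b ∈ S) ∧ ∃ N : ℕ, ∀ n : ℕ, N ≤ n → n ∈ S

/-- The conductor: the smallest `N` such that every `n ≥ N` belongs to `S`. -/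
noncomputable def sgConductor (S : Set ℕ) : ℕ :=
  sInf {N : ℕ | ∀ n : ℕ, N ≤ n → n ∈ S}

/-- The genus: the number of gaps. -/
noncomputable def sgGenus (S : Set ℕ) : ℕ :=
  Sᶜ.ncard

/-- The rank `k(Λ) = c(Λ) - g(Λ)`. -/
noncomputable def sgRank (S : Set ℕ) : ℕ :=
  sgConductor S - sgGenus S

/-- The multiplicity: the smallest nonzero element. -/
noncomputable def sgMultiplicity (S : Set ℕ) : ℕ :=
  sInf {n : ℕ | n ∈ S ∧ n ≠ 0}

/-- The Frobenius number: the largest gap, i.e. the conductor minus one. -/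
noncomputable def sgFrobenius (S : Set ℕ) : ℕ :=
  sgConductor S - 1

/-- `sgElem S j` is the element `λ_j` of `S = {λ_0 = 0 < λ_1 < λ_2 < ⋯}`. -/
noncomputable def sgElem (S : Set ℕ) (j : ℕ) : ℕ :=
  Nat.nth (· ∈ S) j

/-- The jump `u_j = λ_{j+1} - λ_j`. -/
noncomputable def sgJump (S : Set ℕ) (j : ℕ) : ℕ :=
  sgElem S (j + 1) - sgElem S j

/-- The left elements: elements of `S` smaller than the Frobenius number. -/
def sgLeftElements (S : Set ℕ) : Set ℕ :=
  {x : ℕ | x ∈ S ∧ x + 1 < sgConductor S}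

/-- A minimal generator: a nonzero element not the sum of two nonzero elements. -/
def IsMinimalGenerator (S : Set ℕ) (x : ℕ) : Prop :=
  x ∈ S ∧ x ≠ 0 ∧ ¬ ∃ a ∈ S, ∃ b ∈ S, a ≠ 0 ∧ b ≠ 0 ∧ a + b = x

/-- A right generator: a minimal generator larger than the Frobenius number. -/
def IsRightGenerator (S : Set ℕ) (x : ℕ) : Prop :=
  IsMinimalGenerator S x ∧ sgFrobenius S < x

/-- A strong generator: a right generator `μ` such that `μ + m(Λ)` is a minimal
generator of `Λ ∖ {μ}`. -/
noncomputable def IsStrongGenerator (S : Set ℕ) (x : ℕ) : Prop :=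
  IsRightGenerator S x ∧ IsMinimalGenerator (S \ {x}) (x + sgMultiplicity S)

/-- A new generator of `Λ`: a minimal generator of `Λ` that is not a minimal
generator of `Λ ∪ {F(Λ)}`. -/
noncomputable def IsNewGenerator (S : Set ℕ) (x : ℕ) : Prop :=
  IsMinimalGenerator S x ∧ ¬ IsMinimalGenerator (S ∪ {sgFrobenius S}) x

/-- `x` (an element `λ_s ≥ c(Λ)`) is an order-`p` seed of `Λ` if
`x + λ_p ≠ λ_i + λ_j` for all `p < i ≤ j < s`, i.e. for all `i ≤ j` with
`p < i` and `λ_j < x`. -/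
noncomputable def IsSeed (S : Set ℕ) (p x : ℕ) : Prop :=
  sgConductor S ≤ x ∧ ∀ i j : ℕ, p < i → i ≤ j → sgElem S j < x →
    x + sgElem S p ≠ sgElem S i + sgElem S j

/-- `T` is a child of `S`: obtained by removing one right generator. -/
def IsChild (T S : Set ℕ) : Prop :=
  ∃ μ : ℕ, IsRightGenerator S μ ∧ T = S \ {μ}

/-- A grandchild: a child of a child. -/
def IsGrandchild (T S : Set ℕ) : Prop :=
  ∃ C : Set ℕ, IsChild C S ∧ IsChild T C

/-- A great-grandchild: a child of a grandchild. -/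
def IsGreatGrandchild (T S : Set ℕ) : Prop :=
  ∃ C : Set ℕ, IsGrandchild C S ∧ IsChild T C

/-- `⟨a,b,c,…⟩|_κ`: the smallest numerical semigroup containing a given set. -/
def sgClosure (A : Set ℕ) : Set ℕ :=
  ⋂₀ {S : Set ℕ | IsNumericalSemigroup S ∧ A ⊆ S}


theorem statement18 (S : Set ℕ) (hS : IsNumericalSemigroup S)
    (hps : sgConductor S = 2 * sgGenus S - 1) (hg : 5 ≤ sgGenus S) :
    (¬ ∃ T : Set ℕ, IsGrandchild T S) ∧
    (¬ ∃ μ₁ μ₂ : ℕ, μ₁ < μ₂ ∧ IsRightGenerator S μ₁ ∧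
      IsRightGenerator (S \ {μ₁}) μ₂) := by
  classical
  set c := sgConductor S with hcdef
  set g := sgGenus S with hgdef
  have hne : {N : ℕ | ∀ n : ℕ, N ≤ n → n ∈ S}.Nonempty := by
    obtain ⟨N, hN⟩ := hS.2.2; exact ⟨N, hN⟩
  have hc : ∀ n, c ≤ n → n ∈ S := fun n hn => Nat.sInf_mem hne n hn
  have hlt : ∀ x, x ∉ S → x < c := by
    intro x hx; by_contra h; exact hx (hc x (by omega))
  have hF : c - 1 ∉ S := by
    intro hmem
    have hle : c ≤ c - 1 := Nat.sInf_le (by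
      intro n hn
      rcases eq_or_lt_of_le hn with h | h
      · rwa [← h]
      · exact hc n (by omega))
    omega
  have h1S : (1 : ℕ) ∉ S := by
    intro h1
    have hall : ∀ n : ℕ, n ∈ S := by
      intro n; induction n with
      | zero => exact hS.1
      | succ k ih => exact hS.2.1 k ih 1 h1
    exact hF (hall _)
  set A : Finset ℕ := (Finset.range c).filter (fun x => x ∉ S) with hAdef
  have hA : ∀ x, x ∈ A ↔ x ∉ S := by
    intro x
    simp only [hAdef, Finset.mem_filter, Finset.mem_range]
    constructor
    · rintro ⟨-, h⟩; exact h
    · intro h; exact ⟨hlt x h, h⟩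
  have hAcard : A.card = g := by
    have hgS : sgGenus S = Sᶜ.ncard := rfl
    have hset : Sᶜ = (↑A : Set ℕ) := by
      ext x
      simp only [Set.mem_compl_iff, Finset.mem_coe]
      exact (hA x).symm
    rw [hgdef, hgS, hset, Set.ncard_coe_finset]
  have hG1 : ∀ E : Finset ℕ, (∀ e ∈ E, e ∉ S) → E.card ≤ g := by
    intro E hE; rw [← hAcard]
    exact Finset.card_le_card (fun e he => (hA e).2 (hE e he))
  set B : Finset ℕ := (Finset.range c).filter (fun x => ¬ x ∉ S) with hBdef
  have hBcard : B.card = g - 1 := by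
    have hsum := Finset.card_filter_add_card_filter_not
      (s := Finset.range c) (p := fun x => x ∉ S)
    rw [Finset.card_range, ← hAdef, ← hBdef] at hsum
    omega
  have hg1notS : g - 1 ∉ S := by
    intro h
    have := hS.2.1 _ h _ h
    rw [show (g-1) + (g-1) = c - 1 by omega] at this
    exact hF this
  have hg1A : g - 1 ∈ A := (hA _).2 hg1notS
  have himage : B.image (fun b => (c-1) - b) = A.erase (g-1) := by
    apply Finset.eq_of_subset_of_card_le
    · intro y hy
      obtain ⟨b, hbB, rfl⟩ := Finset.mem_image.1 hy
      simp only [hBdef, Finset.mem_filter, Finset.mem_range, not_not] at hbB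
      obtain ⟨hblt, hbS⟩ := hbB
      have hynotS : (c-1) - b ∉ S := by
        intro hmem
        have := hS.2.1 b hbS _ hmem
        rw [show b + ((c-1) - b) = c - 1 by omega] at this
        exact hF this
      refine Finset.mem_erase.2 ⟨?_, (hA _).2 hynotS⟩
      intro heq
      have : b = g - 1 := by omega
      rw [this] at hbS
      exact hg1notS hbS
    · have h1 : (A.erase (g-1)).card = g - 1 := by
        rw [Finset.card_erase_of_mem hg1A, hAcard]
      have h2 : (B.image (fun b => (c-1) - b)).card = g - 1 := by
        rw [Finset.card_image_of_injOn, hBcard]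
        intro a ha b hb hab
        have ha' : a ∈ B := ha
        have hb' : b ∈ B := hb
        simp only [hBdef, Finset.mem_filter, Finset.mem_range] at ha' hb'
        have hab' : c - 1 - a = c - 1 - b := hab
        omega
      omega
  have hPS : ∀ x, x ∉ S → x ≠ g - 1 → (c-1) - x ∈ S ∧ x ≤ c - 1 := by
    intro x hx hxg
    have hxe : x ∈ A.erase (g-1) := Finset.mem_erase.2 ⟨hxg, (hA x).2 hx⟩
    rw [← himage] at hxe
    obtain ⟨b, hbB, hbx⟩ := Finset.mem_image.1 hxe
    simp only [hBdef, Finset.mem_filter, Finset.mem_range, not_not] at hbB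
    constructor
    · rw [show (c-1) - x = b by omega]; exact hbB.2
    · omega
  set m := sgMultiplicity S with hmdef
  have hmmem : m ∈ S ∧ m ≠ 0 := by
    have : sgMultiplicity S = sInf {n : ℕ | n ∈ S ∧ n ≠ 0} := rfl
    have hmem : m ∈ {n : ℕ | n ∈ S ∧ n ≠ 0} := by
      rw [hmdef, this]
      exact Nat.sInf_mem ⟨c, hc c le_rfl, by omega⟩
    exact hmem
  have hmmin : ∀ y, y ∈ S → y ≠ 0 → m ≤ y := by
    intro y hy h0
    rw [hmdef]
    exact Nat.sInf_le ⟨hy, h0⟩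
  have hsmall : ∀ y, 0 < y → y < m → y ∉ S := by
    intro y h0 hym hy
    exact absurd (hmmin y hy (by omega)) (by omega)
  have hm2 : 2 ≤ m := by
    rcases Nat.lt_or_ge m 2 with h | h
    · exfalso
      have h0 := hmmem.2
      have h1 : m = 1 := by omega
      rw [h1] at hmmem
      exact h1S hmmem.1
    · exact h
  have hmc : m < c := by
    have hmlec : m ≤ c := hmmin c (hc c le_rfl) (by omega)
    rcases Nat.lt_or_ge m c with h | h
    · exact h
    · exfalso
      have hgaps : ∀ e ∈ Finset.Icc 1 (c-1), e ∉ S := by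
        intro e he
        rw [Finset.mem_Icc] at he
        exact hsmall e (by omega) (by omega)
      have := hG1 _ hgaps
      rw [Nat.card_Icc] at this
      omega
  -- key lemma
  have key : ∀ μ1 μ2 : ℕ, μ1 < μ2 → IsRightGenerator S μ1 →
      IsRightGenerator (S \ {μ1}) μ2 → False := by
    intro μ1 μ2 hlt12 h1 h2
    have hfr : sgFrobenius S = c - 1 := rfl
    have hfro1 : c - 1 < μ1 := by have := h1.2; omega
    have hμ1c : c ≤ μ1 := by omega
    have hnotsum1 := h1.1.2.2
    have hkill : ∀ a b : ℕ, a ∈ S → b ∈ S → a ≠ μ1 → b ≠ μ1 → a ≠ 0 → b ≠ 0 →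
        a + b = μ2 → False := by
      intro a b ha hb ha1 hb1 ha0 hb0 hab
      exact h2.1.2.2 ⟨a, ⟨ha, ha1⟩, b, ⟨hb, hb1⟩, ha0, hb0, hab⟩
    have hμ1m : μ1 ≤ c - 1 + m := by
      by_contra h
      exact hnotsum1 ⟨m, hmmem.1, μ1 - m, hc _ (by omega), by omega, by omega, by omega⟩
    set t := μ1 - (c-1) with htdef
    have ht1 : 1 ≤ t := by omega
    have htm : t ≤ m := by omega
    have hRG3 : ∀ x, x ∉ S → x ≠ g - 1 → x < c - 1 → x + t ∉ S := by
      intro x hx hxg hxc hmem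
      obtain ⟨hb, hxle⟩ := hPS x hx hxg
      exact hnotsum1 ⟨(c-1)-x, hb, x + t, hmem, by omega, by omega, by omega⟩
    have hchain : ∀ x, x ∉ S →
        (∀ k : ℕ, x + k * t ≠ g - 1 ∧ x + k * t ≠ c - 1) → False := by
      intro x hx havoid
      have hall : ∀ k : ℕ, x + k * t ∉ S := by
        intro k; induction k with
        | zero => simpa using hx
        | succ k ih =>
          have h1' := havoid k
          have h2' : x + k * t < c := hlt _ ih
          have h3' := hRG3 (x + k*t) ih h1'.1 (by omega)
          rw [show x + (k+1) * t = (x + k * t) + t by ring]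
          exact h3'
      have hct : c ≤ c * t := Nat.le_mul_of_pos_right c (by omega)
      exact hall c (hc (x + c * t) (by omega))
    have hRES : ∀ x, x ∉ S → x % t = (g-1) % t ∨ x % t = (c-1) % t := by
      intro x hx
      by_contra h
      push_neg at h
      refine hchain x hx fun k => ⟨?_, ?_⟩
      · intro he; exact h.1 (by rw [← he, Nat.add_mul_mod_self_right])
      · intro he; exact h.2 (by rw [← he, Nat.add_mul_mod_self_right])
    have hclass : t ≤ 2 ∨ (t = 3 ∧ m = 3) := by
      by_contra hcon
      push_neg at hcon
      have ht3 : 3 ≤ t := by omega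
      have hm4 : 4 ≤ m := by
        rcases Nat.lt_or_ge t 4 with h | h
        · have : t = 3 := by omega
          have := hcon.2 this
          omega
        · omega
      have r1 := hRES 1 h1S
      have r2 := hRES 2 (hsmall 2 (by omega) (by omega))
      have r3 := hRES 3 (hsmall 3 (by omega) (by omega))
      have e1 : 1 % t = 1 := Nat.mod_eq_of_lt (by omega)
      have e2 : 2 % t = 2 := Nat.mod_eq_of_lt (by omega)
      rw [e1] at r1; rw [e2] at r2
      rcases Nat.lt_or_ge 3 t with h4 | h4
      · rw [Nat.mod_eq_of_lt (by omega)] at r3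
        omega
      · have ht3' : t = 3 := by omega
        rw [ht3'] at r3 r1 r2
        norm_num at r3
        omega
    have hbound : μ2 ≤ μ1 + m := by
      by_contra h
      push_neg at h
      exact hkill m (μ2 - m) hmmem.1 (hc _ (by omega)) (by omega) (by omega)
        (by omega) (by omega) (by omega)
    have ht123 : t = 1 ∨ t = 2 ∨ (t = 3 ∧ m = 3) := by
      rcases hclass with h | h
      · omega
      · right; right; exact h
    rcases ht123 with ht | ht | ⟨ht, hm3⟩
    · -- t = 1
      have hgaps_low : ∀ y, 1 ≤ y → y ≤ g - 1 → y ∉ S := by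
        have hlow : ∀ k, k ≤ g - 2 → 1 + k ∉ S := by
          intro k
          induction k with
          | zero => intro _; simpa using h1S
          | succ k ih =>
            intro hk
            have hx := ih (by omega)
            rw [show 1 + (k+1) = (1+k) + t by omega]
            exact hRG3 (1+k) hx (by omega) (by omega)
        intro y h1' h2'
        have := hlow (y-1) (by omega)
        rwa [show 1 + (y-1) = y by omega] at this
      have hmid : ∀ x, g ≤ x → x ≤ 2*g - 3 → x ∈ S := by
        intro x hx1 hx2
        by_contra hx
        have hup : ∀ k, k ≤ (c-1) - x → x + k ∉ S := by
          intro k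
          induction k with
          | zero => intro _; simpa using hx
          | succ k ih =>
            intro hk
            have hy := ih (by omega)
            rw [show x + (k+1) = (x + k) + t by omega]
            exact hRG3 (x+k) hy (by omega) (by omega)
        have hsub : ∀ e ∈ Finset.Icc 1 (g-1) ∪ Finset.Icc x (c-1), e ∉ S := by
          intro e he
          rcases Finset.mem_union.1 he with h | h
          · have hm' := Finset.mem_Icc.1 h
            exact hgaps_low e hm'.1 hm'.2
          · have hm' := Finset.mem_Icc.1 h
            have := hup (e - x) (by omega)
            rwa [show x + (e-x) = e by omega] at this
        have hcard := hG1 _ hsub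
        rw [Finset.card_union_of_disjoint, Nat.card_Icc, Nat.card_Icc] at hcard
        · omega
        · rw [Finset.disjoint_left]
          intro a ha ha'
          have h1' := Finset.mem_Icc.1 ha
          have h2' := Finset.mem_Icc.1 ha'
          omega
      have hmg : m = g := by
        have hle1 : m ≤ g := hmmin g (hmid g (by omega) (by omega)) (by omega)
        rcases Nat.lt_or_ge m g with h | h
        · exact absurd hmmem.1 (hgaps_low m (by omega) (by omega))
        · omega
      rcases le_or_gt μ2 (3*g - 3) with hc2 | hc2
      · exact hkill g (μ2 - g) (hmid g (by omega) (by omega))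
          (hmid (μ2 - g) (by omega) (by omega))
          (by omega) (by omega) (by omega) (by omega) (by omega)
      · exact hkill (μ2 - (2*g-3)) (2*g-3)
          (hmid _ (by omega) (by omega)) (hmid _ (by omega) (by omega))
          (by omega) (by omega) (by omega) (by omega) (by omega)
    · -- t = 2
      have hgeven : g % 2 = 0 := by
        by_contra hodd
        exact hchain 1 h1S (fun k => by rw [ht]; omega)
      have hm2' : m = 2 := by
        by_contra hne2
        have hm3' : 3 ≤ m := by omega
        have h2S : (2:ℕ) ∉ S := hsmall 2 (by omega) (by omega)
        have hev : ∀ k, 2 + 2*k ≤ 2*g - 2 → 2 + 2*k ∉ S := by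
          intro k
          induction k with
          | zero => intro _; simpa using h2S
          | succ k ih =>
            intro hk
            have hy := ih (by omega)
            rw [show 2 + 2*(k+1) = (2 + 2*k) + t by omega]
            exact hRG3 _ hy (by omega) (by omega)
        have hod : ∀ k, 1 + 2*k ≤ g - 1 → 1 + 2*k ∉ S := by
          intro k
          induction k with
          | zero => intro _; simpa using h1S
          | succ k ih =>
            intro hk
            have hy := ih (by omega)
            rw [show 1 + 2*(k+1) = (1 + 2*k) + t by omega]
            exact hRG3 _ hy (by omega) (by omega)
        set E := ((Finset.range (g-1)).image (fun k => 2 + 2*k)) ∪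
          ((Finset.range 3).image (fun k => 1 + 2*k)) with hEdef
        have hEsub : ∀ e ∈ E, e ∉ S := by
          intro e he
          rw [hEdef, Finset.mem_union] at he
          rcases he with h | h
          · obtain ⟨k, hk, rfl⟩ := Finset.mem_image.1 h
            rw [Finset.mem_range] at hk
            exact hev k (by omega)
          · obtain ⟨k, hk, rfl⟩ := Finset.mem_image.1 h
            rw [Finset.mem_range] at hk
            exact hod k (by omega)
        have hcard := hG1 _ hEsub
        have hinj1 : Function.Injective (fun k => 2 + 2*k : ℕ → ℕ) := by
          intro a b hab
          have hab' : 2 + 2*a = 2 + 2*b := hab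
          omega
        have hinj2 : Function.Injective (fun k => 1 + 2*k : ℕ → ℕ) := by
          intro a b hab
          have hab' : 1 + 2*a = 1 + 2*b := hab
          omega
        have hdisj : Disjoint ((Finset.range (g-1)).image (fun k => 2 + 2*k))
            ((Finset.range 3).image (fun k => 1 + 2*k)) := by
          rw [Finset.disjoint_left]
          intro a ha ha'
          obtain ⟨k, hk, rfl⟩ := Finset.mem_image.1 ha
          obtain ⟨k', hk', he⟩ := Finset.mem_image.1 ha'
          omega
        rw [hEdef, Finset.card_union_of_disjoint hdisj,
          Finset.card_image_of_injective _ hinj1,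
          Finset.card_image_of_injective _ hinj2,
          Finset.card_range, Finset.card_range] at hcard
        omega
      have h2Smem : (2:ℕ) ∈ S := by rw [← hm2']; exact hmmem.1
      rcases (show μ2 = 2*g + 1 ∨ μ2 = 2*g + 2 by omega) with h | h
      · exact hkill 2 (2*g - 1) h2Smem (hc _ (by omega)) (by omega) (by omega)
          (by omega) (by omega) (by omega)
      · have hg1 : g + 1 ∈ S := by
          by_contra hg1
          exact hchain (g+1) hg1 (fun k => by rw [ht]; omega)
        exact hkill (g+1) (g+1) hg1 hg1 (by omega) (by omega) (by omega)
          (by omega) (by omega)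
    · -- t = 3, m = 3
      have hg3 : g % 3 ≠ 1 := by
        intro hgm
        have hr := hRES 1 h1S
        rw [ht] at hr
        omega
      have h3S : (3:ℕ) ∈ S := by rw [← hm3]; exact hmmem.1
      rcases (show μ2 = 2*g + 2 ∨ μ2 = 2*g + 3 ∨ μ2 = 2*g + 4 by omega) with h | h | h
      · exact hkill 3 (2*g - 1) h3S (hc _ (by omega)) (by omega) (by omega)
          (by omega) (by omega) (by omega)
      · exact hkill 3 (2*g) h3S (hc _ (by omega)) (by omega) (by omega)
          (by omega) (by omega) (by omega)
      · have hgp2 : g + 2 ∈ S := by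
          by_contra hh
          exact hchain (g+2) hh (fun k => by rw [ht]; omega)
        exact hkill (g+2) (g+2) hgp2 hgp2 (by omega) (by omega) (by omega)
          (by omega) (by omega)
  constructor
  · rintro ⟨T, C, ⟨μ1, hrg1, rfl⟩, μ2, hrg2, -⟩
    have hfr : sgFrobenius S = c - 1 := rfl
    have hμc : c ≤ μ1 := by have := hrg1.2; omega
    have hKmem : (μ1+1) ∈ {N : ℕ | ∀ n : ℕ, N ≤ n → n ∈ S \ {μ1}} := by
      intro n hn
      exact ⟨hc n (by omega), by simp only [Set.mem_singleton_iff]; omega⟩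
    have hcc : sgConductor (S \ {μ1}) = μ1 + 1 := by
      have hunf : sgConductor (S \ {μ1}) =
          sInf {N : ℕ | ∀ n : ℕ, N ≤ n → n ∈ S \ {μ1}} := rfl
      have hle : sInf {N : ℕ | ∀ n : ℕ, N ≤ n → n ∈ S \ {μ1}} ≤ μ1 + 1 :=
        Nat.sInf_le hKmem
      have hmem2 := Nat.sInf_mem (⟨μ1+1, hKmem⟩ :
        {N : ℕ | ∀ n : ℕ, N ≤ n → n ∈ S \ {μ1}}.Nonempty)
      have hge : μ1 + 1 ≤ sInf {N : ℕ | ∀ n : ℕ, N ≤ n → n ∈ S \ {μ1}} := by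
        by_contra hcon
        exact (hmem2 μ1 (by omega)).2 rfl
      rw [hunf]
      omega
    have hfr2 : sgFrobenius (S \ {μ1}) = μ1 := by
      have : sgFrobenius (S \ {μ1}) = sgConductor (S \ {μ1}) - 1 := rfl
      omega
    exact key μ1 μ2 (by have := hrg2.2; omega) hrg1 hrg2
  · rintro ⟨μ1, μ2, hlt', h1, h2⟩
    exact key μ1 μ2 hlt' h1 h2
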